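/- Let P₁, P₂ be vertex sequences forming paths in an undirected positively-weighted graph such that P₁ is a shortest path visiting u, v, w in that order (u, v, w distinct), and P₂ is a shortest path visiting v, w, u in that order. Then a contradiction follows; i.e., no such pair of shortest paths exists. -/

import Mathlib

/-- A graph with real edge weights that are strictly positive on edges. -/
structure WeightedGraph (V : Type*) where
  Adj : V → V → Prop
  w : V → V → ℝ
  pos : ∀ {u v : V}, Adj u v → 0 < w u v

namespace WeightedGraph

variable {V : Type*} (G : WeightedGraph V)

/-- The graph is undirected: adjacency and weights are symmetric. -/
def IsUndirected : Prop :=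
  (∀ u v, G.Adj u v → G.Adj v u) ∧ (∀ u v, G.w u v = G.w v u)

/-- Total weight of a vertex sequence (sum of weights of consecutive pairs). -/
def weight (l : List V) : ℝ :=
  ((l.zip l.tail).map fun p => G.w p.1 p.2).sum

/-- A (simple) path: a nonempty sequence of distinct vertices with consecutive
vertices adjacent. -/
def IsPath (l : List V) : Prop :=
  l ≠ [] ∧ l.Chain' G.Adj ∧ l.Nodup

/-- A path beginning at `u` and ending at `v`. -/
def IsPathFrom (l : List V) (u v : V) : Prop :=
  G.IsPath l ∧ l.head? = some u ∧ l.getLast? = some v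

/-- A shortest path between its endpoints: a path whose total weight is at most
that of any path with the same endpoints. -/
def IsShortest (l : List V) : Prop :=
  G.IsPath l ∧ ∀ l', G.IsPath l' → l'.head? = l.head? → l'.getLast? = l.getLast? →
    G.weight l ≤ G.weight l'

/-- Weighted graph distance from `u` to `v`. -/
noncomputable def dist (u v : V) : ℝ :=
  sInf {c : ℝ | ∃ l, G.IsPathFrom l u v ∧ G.weight l = c}

end WeightedGraph

/-- `v` is the first vertex of `P` lying in the set `S`. -/
def FirstIn {V : Type*} (P : List V) (S : Set V) (v : V) : Prop :=
  v ∈ S ∧ ∃ pre post : List V, P = pre ++ v :: post ∧ ∀ x ∈ pre, x ∉ S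

/-- `v` is the last vertex of `P` lying in the set `S`. -/
def LastIn {V : Type*} (P : List V) (S : Set V) (v : V) : Prop :=
  v ∈ S ∧ ∃ pre post : List V, P = pre ++ v :: post ∧ ∀ x ∈ post, x ∉ S

namespace WGAux

open List

variable {V : Type*} (G : WeightedGraph V)

lemma weight_nil : G.weight ([] : List V) = 0 := rfl

lemma weight_single (a : V) : G.weight [a] = 0 := rfl

lemma weight_cons_cons (a b : V) (l : List V) :
    G.weight (a :: b :: l) = G.w a b + G.weight (b :: l) := rfl

lemma weight_append_cons (l₁ : List V) (x : V) (l₂ : List V) :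
    G.weight (l₁ ++ x :: l₂) = G.weight (l₁ ++ [x]) + G.weight (x :: l₂) := by
  induction l₁ with
  | nil => simp [weight_single]
  | cons a t ih =>
    cases t with
    | nil => simp [weight_cons_cons, weight_single]
    | cons b t' =>
      simp only [cons_append, weight_cons_cons] at *
      rw [ih]; ring

lemma weight_nonneg (l : List V) (h : l.Chain' G.Adj) : 0 ≤ G.weight l := by
  induction l with
  | nil => simp [weight_nil]
  | cons a t ih =>
    cases t with
    | nil => simp [weight_single]
    | cons b t' =>
      rw [weight_cons_cons]
      have h' := List.isChain_cons_cons.mp h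
      exact add_nonneg (le_of_lt (G.pos h'.1)) (ih h'.2)

lemma weight_pos (l : List V) (h : l.Chain' G.Adj) {a b : V}
    (ha : l.head? = some a) (hb : l.getLast? = some b) (hab : a ≠ b) :
    0 < G.weight l := by
  cases l with
  | nil => simp at ha
  | cons x t =>
    cases t with
    | nil =>
      simp at ha hb
      exact absurd (ha.symm.trans hb) hab
    | cons y t' =>
      rw [weight_cons_cons]
      have h' := List.isChain_cons_cons.mp h
      exact add_pos_of_pos_of_nonneg (G.pos h'.1) (weight_nonneg G _ h'.2)

lemma weight_reverse (hw : ∀ u v, G.w u v = G.w v u) :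
    ∀ l : List V, G.weight l.reverse = G.weight l := by
  intro l
  induction l with
  | nil => rfl
  | cons a t ih =>
    cases t with
    | nil => rfl
    | cons b t' =>
      have : (a :: b :: t').reverse = (b :: t').reverse ++ [a] := by simp
      rw [this]
      have h2 : (b :: t').reverse = t'.reverse ++ [b] := by simp
      have h3 : (b :: t').reverse ++ [a] = t'.reverse ++ b :: [a] := by simp
      rw [h3, weight_append_cons, ← h2, ih, weight_cons_cons, weight_single,
        weight_cons_cons, hw b a]
      ring

lemma sublist_cons_decomp {α : Type*} {a : α} {l l' : List α} (h : a :: l <+ l') :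
    ∃ p q, l' = p ++ a :: q ∧ l <+ q := by
  induction l' with
  | nil => exact absurd h (by simp)
  | cons b t ih =>
    rcases List.cons_sublist_cons'.mp h with h' | ⟨rfl, h'⟩
    · obtain ⟨p, q, rfl, hq⟩ := ih h'
      exact ⟨b :: p, q, rfl, hq⟩
    · exact ⟨[], t, rfl, h'⟩

lemma head?_append_eq {α : Type*} (A X : List α) (a : α) (h : X.head? = some a) :
    (A ++ X).head? = (A ++ [a]).head? := by
  simp [List.head?_append, h]

lemma getLast?_append_eq {α : Type*} (X B : List α) (b : α) (h : X.getLast? = some b) :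
    (X ++ B).getLast? = (b :: B).getLast? := by
  cases B with
  | nil => simpa using h
  | cons c B' =>
    obtain ⟨y, hy⟩ : ∃ y, (c :: B').getLast? = some y :=
      ⟨_, List.getLast?_eq_getLast (by simp)⟩
    rw [List.getLast?_append, show (b :: c :: B') = [b] ++ c :: B' from rfl,
      List.getLast?_append, hy]
    simp

lemma weight_append_last (r B : List V) (b : V) (hrb : r.getLast? = some b) :
    G.weight (r ++ B) = G.weight r + G.weight (b :: B) := by
  have hr : r ≠ [] := by rintro rfl; simp at hrb
  have : r = r.dropLast ++ [b] := by
    conv_lhs => rw [← List.dropLast_append_getLast hr]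
    rw [List.getLast?_eq_getLast hr] at hrb
    simp [Option.some.injEq] at hrb
    rw [hrb]
  rw [this, List.append_assoc, List.singleton_append, weight_append_cons]

lemma weight_append_append (A r B : List V) (a b : V)
    (hra : r.head? = some a) (hrb : r.getLast? = some b) :
    G.weight (A ++ r ++ B) = G.weight (A ++ [a]) + G.weight r + G.weight (b :: B) := by
  cases r with
  | nil => simp at hra
  | cons x t =>
    simp only [List.head?_cons, Option.some.injEq] at hra
    subst hra
    rw [List.append_assoc, List.cons_append, weight_append_cons G A x (t ++ B), ← List.cons_append,
      weight_append_last G (x :: t) B b hrb]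
    ring

lemma walk_to_path : ∀ (n : ℕ) (l : List V), l.length ≤ n → l ≠ [] → l.Chain' G.Adj →
    ∃ p, G.IsPath p ∧ p.head? = l.head? ∧ p.getLast? = l.getLast? ∧
      G.weight p ≤ G.weight l := by
  intro n
  induction n with
  | zero =>
    intro l hl hne _
    cases l with
    | nil => exact absurd rfl hne
    | cons a t => simp at hl
  | succ n ih =>
    intro l hl hne hc
    by_cases hnd : l.Nodup
    · exact ⟨l, ⟨hne, hc, hnd⟩, rfl, rfl, le_refl _⟩
    · obtain ⟨x, hx⟩ := List.exists_duplicate_iff_not_nodup.mpr hnd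
      rw [List.duplicate_iff_sublist] at hx
      obtain ⟨pre, q, hq1, hq⟩ := sublist_cons_decomp hx
      obtain ⟨mid, post, hq2, -⟩ := sublist_cons_decomp hq
      subst hq2; subst hq1
      have hc' := hc
      have h1 := List.isChain_append.mp hc'
      have h2 := List.isChain_append.mp
        (show ((x :: mid) ++ x :: post).IsChain G.Adj by
          simpa [List.cons_append] using h1.2.1)
      -- chain' of the shortcut list
      have hcl' : (pre ++ x :: post).Chain' G.Adj := by
        refine List.isChain_append.mpr ⟨h1.1, h2.2.1, ?_⟩
        intro y hy z hz
        exact h1.2.2 y hy z (by simpa using hz)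
      have hlen : (pre ++ x :: post).length ≤ n := by
        simp only [List.length_append, List.length_cons] at hl ⊢
        omega
      obtain ⟨p, hp, hph, hpl, hpw⟩ := ih (pre ++ x :: post) hlen (by simp) hcl'
      refine ⟨p, hp, ?_, ?_, ?_⟩
      · rw [hph]; simp [List.head?_append]
      · rw [hpl]
        rw [List.getLast?_append, List.getLast?_append,
          show x :: (mid ++ x :: post) = (x :: mid) ++ x :: post from by simp,
          List.getLast?_append]
        obtain ⟨y, hy⟩ : ∃ y, (x :: post).getLast? = some y :=
          ⟨_, List.getLast?_eq_getLast (by simp)⟩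
        simp [hy]
      · refine le_trans hpw ?_
        rw [weight_append_cons G pre x post, weight_append_cons G pre x (mid ++ x :: post),
          show x :: (mid ++ x :: post) = (x :: mid) ++ x :: post from by simp,
          weight_append_cons G (x :: mid) x post]
        have h0 : 0 ≤ G.weight ((x :: mid) ++ [x]) := by
          apply weight_nonneg
          refine List.isChain_append.mpr ⟨h2.1, List.isChain_singleton x, ?_⟩
          intro y hy z hz
          exact h2.2.2 y hy z (by simpa using hz)
        linarith

lemma shortest_segment (P : List V) (hP : G.IsShortest P) (A B m : List V) (a b : V)
    (hdec : P = A ++ (a :: (m ++ [b])) ++ B)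
    (q : List V) (hq : q.Chain' G.Adj) (hqa : q.head? = some a)
    (hqb : q.getLast? = some b) :
    G.weight (a :: (m ++ [b])) ≤ G.weight q := by
  have hqne : q ≠ [] := by rintro rfl; simp at hqa
  have hsega : (a :: (m ++ [b])).head? = some a := rfl
  have hsegb : (a :: (m ++ [b])).getLast? = some b := by
    rw [show a :: (m ++ [b]) = (a :: m) ++ [b] from rfl, List.getLast?_concat]
  have hcP : P.Chain' G.Adj := hP.1.2.1
  rw [hdec, List.append_assoc] at hcP
  have h1 := List.isChain_append.mp hcP
  have h2 := List.isChain_append.mp h1.2.1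
  have hcl' : (A ++ (q ++ B)).Chain' G.Adj := by
    refine List.isChain_append.mpr ⟨h1.1, List.isChain_append.mpr ⟨hq, h2.2.1, ?_⟩, ?_⟩
    · intro y hy z hz
      refine h2.2.2 y ?_ z hz
      rw [hqb] at hy; rwa [hsegb]
    · intro y hy z hz
      refine h1.2.2 y hy z ?_
      rw [List.head?_append, hqa] at hz
      rwa [List.head?_append, hsega]
  obtain ⟨p, hp, hph, hpl, hpw⟩ :=
    walk_to_path G (A ++ (q ++ B)).length (A ++ (q ++ B)) le_rfl
      (by simp [hqne]) hcl'
  have hqB : (q ++ B).head? = some a := by rw [List.head?_append, hqa]; rfl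
  have hsB : ((a :: (m ++ [b])) ++ B).head? = some a := rfl
  have hhead : p.head? = P.head? := by
    rw [hph, hdec, List.append_assoc, head?_append_eq A (q ++ B) a hqB,
      ← head?_append_eq A ((a :: (m ++ [b])) ++ B) a hsB]
  have hAq : (A ++ q).getLast? = some b := by
    rw [List.getLast?_append, hqb]; rfl
  have hAs : (A ++ (a :: (m ++ [b]))).getLast? = some b := by
    rw [List.getLast?_append, hsegb]; rfl
  have hlast : p.getLast? = P.getLast? := by
    rw [hpl, ← List.append_assoc, hdec,
      getLast?_append_eq (A ++ q) B b hAq,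
      ← getLast?_append_eq (A ++ (a :: (m ++ [b]))) B b hAs]
  have hle : G.weight P ≤ G.weight p := hP.2 p hp hhead hlast
  have hwl' : G.weight (A ++ (q ++ B)) =
      G.weight (A ++ [a]) + G.weight q + G.weight (b :: B) := by
    rw [← List.append_assoc]
    exact weight_append_append G A q B a b hqa hqb
  have hwP : G.weight P =
      G.weight (A ++ [a]) + G.weight (a :: (m ++ [b])) + G.weight (b :: B) := by
    rw [hdec]
    exact weight_append_append G A _ B a b hsega hsegb
  have := le_trans hle hpw
  rw [hwP, hwl'] at this
  linarith

end WGAux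

/-- In an undirected positively-weighted graph, there is no pair of shortest paths
`P₁`, `P₂` with distinct vertices `u`, `v`, `w` such that `P₁` visits `u, v, w` in
that order and `P₂` visits `v, w, u` in that order. -/
theorem no_cyclically_ordered_shortest_paths {V : Type*} (G : WeightedGraph V)
    (hG : G.IsUndirected) (P₁ P₂ : List V) (u v w : V)
    (huv : u ≠ v) (hvw : v ≠ w) (huw : u ≠ w)
    (h₁ : G.IsShortest P₁) (h₂ : G.IsShortest P₂)
    (hseq₁ : List.Sublist [u, v, w] P₁) (hseq₂ : List.Sublist [v, w, u] P₂) : False := by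
  classical
  obtain ⟨hAdj, hw⟩ := hG
  -- decompose P₁ and P₂
  obtain ⟨s₀, r₁, hd₁, hs₁⟩ := WGAux.sublist_cons_decomp hseq₁
  obtain ⟨s₁, r₂, hd₂, hs₂⟩ := WGAux.sublist_cons_decomp hs₁
  obtain ⟨s₂, s₃, hd₃, -⟩ := WGAux.sublist_cons_decomp hs₂
  subst hd₃; subst hd₂; subst hd₁
  obtain ⟨t₀, q₁, he₁, ht₁⟩ := WGAux.sublist_cons_decomp hseq₂
  obtain ⟨t₁, q₂, he₂, ht₂⟩ := WGAux.sublist_cons_decomp ht₁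
  obtain ⟨t₂, t₃, he₃, -⟩ := WGAux.sublist_cons_decomp ht₂
  subst he₃; subst he₂; subst he₁
  set P₁ := s₀ ++ u :: (s₁ ++ v :: (s₂ ++ w :: s₃)) with hP₁
  set P₂ := t₀ ++ v :: (t₁ ++ w :: (t₂ ++ u :: t₃)) with hP₂
  -- segments
  set Suv : List V := u :: (s₁ ++ [v]) with hSuv
  set Svw : List V := v :: (s₂ ++ [w]) with hSvw
  set Tvw : List V := v :: (t₁ ++ [w]) with hTvw
  set Twu : List V := w :: (t₂ ++ [u]) with hTwu
  -- chain' of segments (as infixes)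
  have hc₁ : P₁.Chain' G.Adj := h₁.1.2.1
  have hc₂ : P₂.Chain' G.Adj := h₂.1.2.1
  have hcSuv : Suv.Chain' G.Adj :=
    hc₁.infix ⟨s₀, s₂ ++ w :: s₃, by simp [hSuv, hP₁]⟩
  have hcSvw : Svw.Chain' G.Adj :=
    hc₁.infix ⟨s₀ ++ u :: s₁, s₃, by simp [hSvw, hP₁]⟩
  have hcTvw : Tvw.Chain' G.Adj :=
    hc₂.infix ⟨t₀, t₂ ++ u :: t₃, by simp [hTvw, hP₂]⟩
  have hcTwu : Twu.Chain' G.Adj :=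
    hc₂.infix ⟨t₀ ++ v :: t₁, t₃, by simp [hTwu, hP₂]⟩
  -- first inequality : weight of u→w segment of P₁ ≤ weight Twu (reversed)
  have hrev_chain : Twu.reverse.Chain' G.Adj := by
    change List.IsChain G.Adj Twu.reverse; rw [List.isChain_reverse]
    exact hcTwu.imp fun a b hab => hAdj a b hab
  have hTwu_last : Twu.getLast? = some u := by
    rw [hTwu, show w :: (t₂ ++ [u]) = (w :: t₂) ++ [u] from by simp, List.getLast?_concat]
  have ha : G.weight (u :: ((s₁ ++ v :: s₂) ++ [w])) ≤ G.weight Twu.reverse := by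
    refine WGAux.shortest_segment G P₁ h₁ s₀ s₃ (s₁ ++ v :: s₂) u w ?_ Twu.reverse
      hrev_chain ?_ ?_
    · simp [hP₁]
    · rw [List.head?_reverse, hTwu_last]
    · rw [List.getLast?_reverse, hTwu]; rfl
  -- second inequality : weight of v→u segment of P₂ ≤ weight Suv (reversed)
  have hrev_chain' : Suv.reverse.Chain' G.Adj := by
    change List.IsChain G.Adj Suv.reverse; rw [List.isChain_reverse]
    exact hcSuv.imp fun a b hab => hAdj a b hab
  have hSuv_last : Suv.getLast? = some v := by
    rw [hSuv, show u :: (s₁ ++ [v]) = (u :: s₁) ++ [v] from by simp, List.getLast?_concat]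
  have hb : G.weight (v :: ((t₁ ++ w :: t₂) ++ [u])) ≤ G.weight Suv.reverse := by
    refine WGAux.shortest_segment G P₂ h₂ t₀ t₃ (t₁ ++ w :: t₂) v u ?_ Suv.reverse
      hrev_chain' ?_ ?_
    · simp [hP₂]
    · rw [List.head?_reverse, hSuv_last]
    · rw [List.getLast?_reverse, hSuv]; rfl
  -- weights of reverses
  rw [WGAux.weight_reverse G hw] at ha hb
  -- weight splits
  have hsplit₁ : G.weight (u :: ((s₁ ++ v :: s₂) ++ [w])) = G.weight Suv + G.weight Svw := by
    rw [show u :: ((s₁ ++ v :: s₂) ++ [w]) = (u :: s₁) ++ v :: (s₂ ++ [w]) from by simp,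
      WGAux.weight_append_cons G (u :: s₁) v (s₂ ++ [w]),
      show (u :: s₁) ++ [v] = Suv from by simp [hSuv], hSvw]
  have hsplit₂ : G.weight (v :: ((t₁ ++ w :: t₂) ++ [u])) = G.weight Tvw + G.weight Twu := by
    rw [show v :: ((t₁ ++ w :: t₂) ++ [u]) = (v :: t₁) ++ w :: (t₂ ++ [u]) from by simp,
      WGAux.weight_append_cons G (v :: t₁) w (t₂ ++ [u]),
      show (v :: t₁) ++ [w] = Tvw from by simp [hTvw], hTwu]
  -- positivity
  have hposS : 0 < G.weight Svw := by
    refine WGAux.weight_pos G Svw hcSvw (a := v) (b := w) rfl ?_ hvw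
    rw [hSvw, show v :: (s₂ ++ [w]) = (v :: s₂) ++ [w] from by simp, List.getLast?_concat]
  have hposT : 0 < G.weight Tvw := by
    refine WGAux.weight_pos G Tvw hcTvw (a := v) (b := w) rfl ?_ hvw
    rw [hTvw, show v :: (t₁ ++ [w]) = (v :: t₁) ++ [w] from by simp, List.getLast?_concat]
  rw [hsplit₁] at ha
  rw [hsplit₂] at hb
  linarith
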